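/- Suppose all configurations of a variation Γ are convex subsets of the grid space ℤ² (containing the origin and connected). Then for configurations C, C' of Γ, a node v ∈ C, and a time t with d_C(v_gen, v) ≤ t, one has C ≡'_{t,v} C' if and only if C' is a consistent extension of M(v,t,C); i.e., condition (2) of the general criterion is automatic. -/

import Mathlib

open scoped Classical

/-- Two grid positions are adjacent iff their L1 distance is 1. -/
def gridAdj (p q : ℤ × ℤ) : Prop := |p.1 - q.1| + |p.2 - q.2| = 1

lemma gridAdj_symm {p q : ℤ × ℤ} (h : gridAdj p q) : gridAdj q p := by
  unfold gridAdj at h ⊢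
  rw [abs_sub_comm q.1 p.1, abs_sub_comm q.2 p.2]
  exact h

lemma gridAdj_irrefl (p : ℤ × ℤ) : ¬ gridAdj p p := by simp [gridAdj]

/-- The graph induced on a set `X` of grid positions. -/
def gridGraph (X : Set (ℤ × ℤ)) : SimpleGraph (ℤ × ℤ) where
  Adj p q := p ∈ X ∧ q ∈ X ∧ gridAdj p q
  symm := ⟨fun p q h => ⟨h.2.1, h.1, gridAdj_symm h.2.2⟩⟩
  loopless := ⟨fun p h => gridAdj_irrefl p h.2.2⟩

/-- Graph distance inside the set `X`. -/
noncomputable def gdist (X : Set (ℤ × ℤ)) (p q : ℤ × ℤ) : ℕ := (gridGraph X).dist p q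

/-- The boundary condition of `p` in `X`: it records which of the four
neighbors of `p` lie in `X`. -/
def bcond (X : Set (ℤ × ℤ)) (p : ℤ × ℤ) : Set (ℤ × ℤ) := {q ∈ X | gridAdj p q}

/-- The set `M(v, t, X)` of nodes `w` with `d(v_gen, w) + d(w, v) ≤ t`. -/
noncomputable def Mset (v : ℤ × ℤ) (t : ℕ) (X : Set (ℤ × ℤ)) : Set (ℤ × ℤ) :=
  {w ∈ X | gdist X (0, 0) w + gdist X w v ≤ t}

/-- The available information (local map) `ai(v, t, X)`; `none` plays the role of `Q`. -/
noncomputable def ai (v : ℤ × ℤ) (t : ℕ) (X : Set (ℤ × ℤ)) :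
    Option (ℕ × (ℤ × ℤ) × Set ((ℤ × ℤ) × Set (ℤ × ℤ))) :=
  if v ∈ X ∧ (gridGraph X).Reachable (0, 0) v ∧ gdist X (0, 0) v ≤ t then
    some (t, v, (fun w => (w, bcond X w)) '' Mset v t X)
  else none

/-- `X ≡'_{t,v} Y` : `v ∈ X ∩ Y` and `ai(v,t,X) = ai(v,t,Y) ≠ Q`. -/
def equivAt (t : ℕ) (v : ℤ × ℤ) (X Y : Set (ℤ × ℤ)) : Prop :=
  v ∈ X ∧ v ∈ Y ∧ ai v t X = ai v t Y ∧ ai v t X ≠ none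

/-- A configuration: a finite connected set of positions containing the origin. -/
def IsConfig (X : Set (ℤ × ℤ)) : Prop :=
  X.Finite ∧ (0, 0) ∈ X ∧ ∀ p ∈ X, ∀ q ∈ X, (gridGraph X).Reachable p q

/-- `Y` is a consistent extension of the subset `M` of `X`. -/
def ConsExt (X M Y : Set (ℤ × ℤ)) : Prop := M ⊆ Y ∧ ∀ w ∈ M, bcond X w = bcond Y w

/-- `X` is convex: every shortest grid path between two of its elements lies in `X`. -/
def GridConvex (X : Set (ℤ × ℤ)) : Prop :=
  ∀ p ∈ X, ∀ q ∈ X, ∀ l : List (ℤ × ℤ),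
    l.head? = some p → l.getLast? = some q → l.Chain' gridAdj →
    (l.length : ℤ) = |p.1 - q.1| + |p.2 - q.2| + 1 → ∀ x ∈ l, x ∈ X

/-- L1 distance as an integer. -/
def L1 (p q : ℤ × ℤ) : ℤ := |p.1 - q.1| + |p.2 - q.2|

lemma L1_nonneg (p q : ℤ × ℤ) : 0 ≤ L1 p q := add_nonneg (abs_nonneg _) (abs_nonneg _)

lemma L1_comm (p q : ℤ × ℤ) : L1 p q = L1 q p := by
  unfold L1; rw [abs_sub_comm p.1 q.1, abs_sub_comm p.2 q.2]

lemma L1_eq_zero {p q : ℤ × ℤ} : L1 p q = 0 ↔ p = q := by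
  unfold L1
  constructor
  · intro h
    have h1 : |p.1 - q.1| = 0 ∧ |p.2 - q.2| = 0 := by
      constructor <;> nlinarith [abs_nonneg (p.1 - q.1), abs_nonneg (p.2 - q.2)]
    have := abs_eq_zero.mp h1.1
    have := abs_eq_zero.mp h1.2
    exact Prod.ext (by omega) (by omega)
  · rintro rfl; simp

lemma L1_triangle (p q r : ℤ × ℤ) : L1 p r ≤ L1 p q + L1 q r := by
  unfold L1
  have h1 := abs_sub_le p.1 q.1 r.1
  have h2 := abs_sub_le p.2 q.2 r.2
  linarith

lemma gridAdj_iff {p q : ℤ × ℤ} : gridAdj p q ↔ L1 p q = 1 := Iff.rfl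

/-- One unit step from `p` towards `q`. -/
def stepToward (p q : ℤ × ℤ) : ℤ × ℤ :=
  if p.1 ≠ q.1 then (p.1 + (q.1 - p.1).sign, p.2) else (p.1, p.2 + (q.2 - p.2).sign)

lemma abs_sub_sign {d : ℤ} (hd : d ≠ 0) : |d - d.sign| = |d| - 1 := by
  rcases lt_trichotomy d 0 with h | h | h
  · rw [Int.sign_eq_neg_one_of_neg h, abs_of_nonpos (by omega), abs_of_neg h]; ring
  · exact absurd h hd
  · rw [Int.sign_eq_one_of_pos h, abs_of_nonneg (by omega), abs_of_pos h]

lemma abs_sign {d : ℤ} (hd : d ≠ 0) : |d.sign| = 1 := by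
  rcases lt_trichotomy d 0 with h | h | h
  · rw [Int.sign_eq_neg_one_of_neg h]; rfl
  · exact absurd h hd
  · rw [Int.sign_eq_one_of_pos h]; rfl

lemma stepToward_spec {p q : ℤ × ℤ} (h : p ≠ q) :
    gridAdj p (stepToward p q) ∧ L1 (stepToward p q) q + 1 = L1 p q := by
  unfold stepToward
  by_cases h1 : p.1 ≠ q.1
  · rw [if_pos h1]
    have hd : q.1 - p.1 ≠ 0 := fun hc => h1 (by omega)
    have hs := abs_sub_sign hd
    have hs1 : |(q.1 - p.1).sign| = 1 := abs_sign hd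
    constructor
    · show |p.1 - (p.1 + (q.1 - p.1).sign)| + |p.2 - p.2| = 1
      rw [show p.1 - (p.1 + (q.1 - p.1).sign) = -(q.1 - p.1).sign by ring, abs_neg]
      simpa using hs1
    · show |p.1 + (q.1 - p.1).sign - q.1| + |p.2 - q.2| + 1 = |p.1 - q.1| + |p.2 - q.2|
      have : |p.1 + (q.1 - p.1).sign - q.1| = |q.1 - p.1| - 1 := by
        rw [show p.1 + (q.1 - p.1).sign - q.1 = -((q.1 - p.1) - (q.1 - p.1).sign) by ring, abs_neg, hs]
      rw [this, abs_sub_comm p.1 q.1]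
      have : 1 ≤ |q.1 - p.1| := Int.one_le_abs hd
      ring
  · rw [if_neg h1]
    push_neg at h1
    have h2 : p.2 ≠ q.2 := fun hc => h (Prod.ext h1 hc)
    have hd : q.2 - p.2 ≠ 0 := fun hc => h2 (by omega)
    have hs := abs_sub_sign hd
    have hs1 : |(q.2 - p.2).sign| = 1 := abs_sign hd
    constructor
    · show |p.1 - p.1| + |p.2 - (p.2 + (q.2 - p.2).sign)| = 1
      rw [show p.2 - (p.2 + (q.2 - p.2).sign) = -(q.2 - p.2).sign by ring, abs_neg]
      simpa using hs1
    · show |p.1 - q.1| + |p.2 + (q.2 - p.2).sign - q.2| + 1 = |p.1 - q.1| + |p.2 - q.2|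
      have : |p.2 + (q.2 - p.2).sign - q.2| = |q.2 - p.2| - 1 := by
        rw [show p.2 + (q.2 - p.2).sign - q.2 = -((q.2 - p.2) - (q.2 - p.2).sign) by ring, abs_neg, hs]
      rw [this, abs_sub_comm p.2 q.2]
      ring

/-- An L1-geodesic list from `p` towards `q` with `n` steps. -/
def geoList : ℕ → (ℤ × ℤ) → (ℤ × ℤ) → List (ℤ × ℤ)
  | 0, p, _ => [p]
  | n + 1, p, q => p :: geoList n (stepToward p q) q

lemma geoList_length (n : ℕ) (p q : ℤ × ℤ) : (geoList n p q).length = n + 1 := by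
  induction n generalizing p with
  | zero => rfl
  | succ n ih => simp [geoList, ih]

lemma geoList_head (n : ℕ) (p q : ℤ × ℤ) : (geoList n p q).head? = some p := by
  cases n <;> rfl

lemma geoList_ne_nil (n : ℕ) (p q : ℤ × ℤ) : geoList n p q ≠ [] := by
  cases n <;> simp [geoList]

lemma geoList_last (n : ℕ) (p q : ℤ × ℤ) (h : L1 p q = n) : (geoList n p q).getLast? = some q := by
  induction n generalizing p with
  | zero => rw [L1_eq_zero.mp h]; rfl
  | succ n ih =>
    have hpq : p ≠ q := by
      intro hc; rw [hc] at h; rw [L1_eq_zero.mpr rfl] at h; omega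
    have hstep := stepToward_spec hpq
    have hL : L1 (stepToward p q) q = n := by omega
    have := ih (stepToward p q) hL
    show (p :: geoList n (stepToward p q) q).getLast? = some q
    rcases List.exists_cons_of_ne_nil (geoList_ne_nil n (stepToward p q) q) with ⟨a, l, hl⟩
    rw [hl] at this ⊢
    rwa [List.getLast?_cons_cons]

lemma geoList_chain (n : ℕ) (p q : ℤ × ℤ) (h : L1 p q = n) : (geoList n p q).Chain' gridAdj := by
  induction n generalizing p with
  | zero => exact List.isChain_singleton p
  | succ n ih =>
    have hpq : p ≠ q := by
      intro hc; rw [hc] at h; rw [L1_eq_zero.mpr rfl] at h; omega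
    have hstep := stepToward_spec hpq
    have hL : L1 (stepToward p q) q = n := by omega
    have htail := ih (stepToward p q) hL
    show (p :: geoList n (stepToward p q) q).Chain' gridAdj
    rcases List.exists_cons_of_ne_nil (geoList_ne_nil n (stepToward p q) q) with ⟨a, l, hl⟩
    have ha : a = stepToward p q := by
      have := geoList_head n (stepToward p q) q
      rw [hl] at this; simpa using this
    rw [hl] at htail ⊢
    rw [List.Chain', List.isChain_cons_cons]
    exact ⟨by rw [ha]; exact hstep.1, htail⟩

lemma geoList_self_mem (n : ℕ) (p q : ℤ × ℤ) : p ∈ geoList n p q := by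
  cases n <;> simp [geoList]

lemma geoList_step_mem (n : ℕ) (p q : ℤ × ℤ) : stepToward p q ∈ geoList (n + 1) p q := by
  show stepToward p q ∈ p :: geoList n (stepToward p q) q
  exact List.mem_cons_of_mem _ (geoList_self_mem n _ q)

/-- In a convex set all geodesic points stay in the set. -/
lemma geoList_subset {X : Set (ℤ × ℤ)} (hX : GridConvex X) {p q : ℤ × ℤ} (hp : p ∈ X)
    (hq : q ∈ X) (n : ℕ) (h : L1 p q = n) : ∀ x ∈ geoList n p q, x ∈ X := by
  apply hX p hp q hq (geoList n p q) (geoList_head n p q) (geoList_last n p q h)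
    (geoList_chain n p q h)
  rw [geoList_length]
  show ((n : ℤ) + 1) = L1 p q + 1
  omega

lemma walk_of_geo (X : Set (ℤ × ℤ)) (n : ℕ) (p q : ℤ × ℤ) (h : L1 p q = n)
    (hmem : ∀ x ∈ geoList n p q, x ∈ X) : ∃ w : (gridGraph X).Walk p q, w.length = n := by
  induction n generalizing p with
  | zero => rw [L1_eq_zero.mp h]; exact ⟨SimpleGraph.Walk.nil, rfl⟩
  | succ n ih =>
    have hpq : p ≠ q := by
      intro hc; rw [hc] at h; rw [L1_eq_zero.mpr rfl] at h; omega
    have hstep := stepToward_spec hpq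
    have hL : L1 (stepToward p q) q = n := by omega
    have hmem' : ∀ x ∈ geoList n (stepToward p q) q, x ∈ X := fun x hx =>
      hmem x (List.mem_cons_of_mem _ hx)
    obtain ⟨w, hw⟩ := ih (stepToward p q) hL hmem'
    have hpX : p ∈ X := hmem p (geoList_self_mem _ p q)
    have hsX : stepToward p q ∈ X := hmem _ (geoList_step_mem n p q)
    exact ⟨SimpleGraph.Walk.cons (show (gridGraph X).Adj p (stepToward p q) from ⟨hpX, hsX, hstep.1⟩) w, by simp [hw]⟩

/-- Lower bound: any walk in the grid graph has length at least the L1 distance. -/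
lemma L1_le_walk_length {X : Set (ℤ × ℤ)} {p q : ℤ × ℤ} (w : (gridGraph X).Walk p q) :
    L1 p q ≤ (w.length : ℤ) := by
  induction w with
  | nil => rw [L1_eq_zero.mpr rfl]; simp
  | cons h w ih =>
    have h1 : L1 _ _ = 1 := h.2.2
    calc L1 _ _ ≤ L1 _ _ + L1 _ _ := L1_triangle _ _ _
    _ ≤ 1 + (w.length : ℤ) := by rw [h1]; linarith
    _ = ((SimpleGraph.Walk.cons h w).length : ℤ) := by simp; ring

/-- In a convex set, graph distance equals L1 distance. -/
lemma gdist_convex {X : Set (ℤ × ℤ)} (hX : GridConvex X) {p q : ℤ × ℤ} (hp : p ∈ X)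
    (hq : q ∈ X) : (gridGraph X).Reachable p q ∧ (gdist X p q : ℤ) = L1 p q := by
  obtain ⟨n, hn⟩ : ∃ n : ℕ, L1 p q = n :=
    ⟨(L1 p q).toNat, (Int.toNat_of_nonneg (L1_nonneg p q)).symm⟩
  obtain ⟨w, hw⟩ := walk_of_geo X n p q hn (geoList_subset hX hp hq n hn)
  have hreach : (gridGraph X).Reachable p q := ⟨w⟩
  refine ⟨hreach, le_antisymm ?_ ?_⟩
  · have := SimpleGraph.dist_le w
    rw [hw] at this
    unfold gdist
    omega
  · obtain ⟨w', hw'⟩ := hreach.exists_walk_length_eq_dist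
    have := L1_le_walk_length w'
    rw [hw'] at this
    unfold gdist
    omega
/-- Key lemma: any point of `C'` whose L1 detour through `v` is at most `t` lies in `C`. -/
lemma key_mem {C C' : Set (ℤ × ℤ)} (hC : IsConfig C) (hC' : IsConfig C')
    (hconv : GridConvex C) (hconv' : GridConvex C') {v : ℤ × ℤ} (hv : v ∈ C) {t : ℕ}
    (hM : Mset v t C ⊆ C') (hbc : ∀ w ∈ Mset v t C, bcond C w = bcond C' w) :
    ∀ n : ℕ, ∀ w ∈ C', L1 (0, 0) w = n → L1 (0, 0) w + L1 w v ≤ (t : ℤ) → w ∈ C := by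
  intro n
  induction n with
  | zero =>
    intro w _ h0 _
    obtain rfl := L1_eq_zero.mp h0
    exact hC.2.1
  | succ n ih =>
    intro w hw h0 hsum
    have hwne : w ≠ (0, 0) := by
      intro hc; rw [hc, L1_eq_zero.mpr rfl] at h0; omega
    set u := stepToward w (0, 0) with hu
    have hstep := stepToward_spec hwne
    rw [← hu] at hstep
    have hLw0 : L1 w (0, 0) = (n : ℤ) + 1 := by rw [L1_comm]; exact_mod_cast h0
    have hLu0 : L1 u (0, 0) = (n : ℤ) := by omega
    have hL0u : L1 (0, 0) u = (n : ℤ) := by rw [L1_comm]; exact hLu0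
    -- u ∈ C' via convexity of C'
    have huC' : u ∈ C' := by
      have hmem := geoList_subset hconv' hw hC'.2.1 (n + 1) (by exact_mod_cast hLw0)
      exact hmem u (geoList_step_mem n w (0, 0))
    -- distance bound for u
    have hLuw : L1 u w = 1 := by rw [L1_comm]; exact hstep.1
    have huv : L1 u v ≤ 1 + L1 w v := by
      have := L1_triangle u w v
      omega
    have husum : L1 (0, 0) u + L1 u v ≤ (t : ℤ) := by omega
    have huC : u ∈ C := ih u huC' (by exact_mod_cast hL0u) husum
    -- u ∈ Mset v t C
    have hd1 := (gdist_convex hconv hC.2.1 huC).2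
    have hd2 := (gdist_convex hconv huC hv).2
    have huM : u ∈ Mset v t C := by
      refine ⟨huC, ?_⟩
      have : (gdist C (0, 0) u : ℤ) + (gdist C u v : ℤ) ≤ (t : ℤ) := by
        rw [hd1, hd2]; exact husum
      exact_mod_cast this
    -- w ∈ bcond C' u = bcond C u
    have hwbc : w ∈ bcond C' u := ⟨hw, gridAdj_symm hstep.1⟩
    rw [← hbc u huM] at hwbc
    exact hwbc.1
theorem stmt3 (C C' : Set (ℤ × ℤ)) (hC : IsConfig C) (hC' : IsConfig C')
    (hconv : GridConvex C) (hconv' : GridConvex C')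
    (v : ℤ × ℤ) (hv : v ∈ C) (t : ℕ) (ht : gdist C (0, 0) v ≤ t) :
    equivAt t v C C' ↔ ConsExt C (Mset v t C) C' := by
  have h0C : (0, 0) ∈ C := hC.2.1
  have h0C' : (0, 0) ∈ C' := hC'.2.1
  have hreachC : (gridGraph C).Reachable (0, 0) v := (gdist_convex hconv h0C hv).1
  have hcondC : v ∈ C ∧ (gridGraph C).Reachable (0, 0) v ∧ gdist C (0, 0) v ≤ t :=
    ⟨hv, hreachC, ht⟩
  have haiC : ai v t C = some (t, v, (fun w => (w, bcond C w)) '' Mset v t C) :=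
    if_pos hcondC
  have hvM : v ∈ Mset v t C := by
    refine ⟨hv, ?_⟩
    have : gdist C v v = 0 := SimpleGraph.dist_self
    omega
  constructor
  · rintro ⟨_, hvC', hai, hne⟩
    -- extract the condition for C'
    have hcondC' : v ∈ C' ∧ (gridGraph C').Reachable (0, 0) v ∧ gdist C' (0, 0) v ≤ t := by
      by_contra hcon
      rw [haiC] at hai
      rw [ai, if_neg hcon] at hai
      exact Option.some_ne_none _ hai
    have haiC' : ai v t C' = some (t, v, (fun w => (w, bcond C' w)) '' Mset v t C') :=
      if_pos hcondC'
    rw [haiC, haiC'] at hai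
    have himg : (fun w => (w, bcond C w)) '' Mset v t C
        = (fun w => (w, bcond C' w)) '' Mset v t C' := by
      have := Option.some_injective _ hai
      exact (Prod.ext_iff.mp (Prod.ext_iff.mp this).2).2
    constructor
    · intro w hw
      have : (w, bcond C w) ∈ (fun w => (w, bcond C' w)) '' Mset v t C' := by
        rw [← himg]; exact ⟨w, hw, rfl⟩
      obtain ⟨w', hw', heq⟩ := this
      have hww' : w' = w := (Prod.ext_iff.mp heq).1
      rw [hww'] at hw'
      exact hw'.1
    · intro w hw
      have : (w, bcond C w) ∈ (fun w => (w, bcond C' w)) '' Mset v t C' := by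
        rw [← himg]; exact ⟨w, hw, rfl⟩
      obtain ⟨w', hw', heq⟩ := this
      have hww' : w' = w := (Prod.ext_iff.mp heq).1
      rw [hww'] at heq
      exact ((Prod.ext_iff.mp heq).2).symm
  · rintro ⟨hM, hbc⟩
    have hvC' : v ∈ C' := hM hvM
    -- distances
    have hdC := (gdist_convex hconv h0C hv).2
    have hdC' := (gdist_convex hconv' h0C' hvC').2
    have htC' : gdist C' (0, 0) v ≤ t := by
      have : (gdist C' (0, 0) v : ℤ) = (gdist C (0, 0) v : ℤ) := by rw [hdC, hdC']
      omega
    have hcondC' : v ∈ C' ∧ (gridGraph C').Reachable (0, 0) v ∧ gdist C' (0, 0) v ≤ t :=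
      ⟨hvC', (gdist_convex hconv' h0C' hvC').1, htC'⟩
    have haiC' : ai v t C' = some (t, v, (fun w => (w, bcond C' w)) '' Mset v t C') :=
      if_pos hcondC'
    -- Mset equality
    have hMeq : Mset v t C' = Mset v t C := by
      ext w
      constructor
      · rintro ⟨hwC', hwd⟩
        have hd1 := (gdist_convex hconv' h0C' hwC').2
        have hd2 := (gdist_convex hconv' hwC' hvC').2
        have hL : L1 (0, 0) w + L1 w v ≤ (t : ℤ) := by
          rw [← hd1, ← hd2]
          exact_mod_cast hwd
        have hwC : w ∈ C := key_mem hC hC' hconv hconv' hv hM hbc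
          (L1 (0, 0) w).toNat w hwC'
          (Int.toNat_of_nonneg (L1_nonneg _ _)).symm hL
        refine ⟨hwC, ?_⟩
        have e1 := (gdist_convex hconv h0C hwC).2
        have e2 := (gdist_convex hconv hwC hv).2
        have : (gdist C (0, 0) w : ℤ) + (gdist C w v : ℤ) ≤ (t : ℤ) := by
          rw [e1, e2]; exact hL
        exact_mod_cast this
      · rintro ⟨hwC, hwd⟩
        have hwC' : w ∈ C' := hM ⟨hwC, hwd⟩
        refine ⟨hwC', ?_⟩
        have e1 := (gdist_convex hconv h0C hwC).2
        have e2 := (gdist_convex hconv hwC hv).2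
        have f1 := (gdist_convex hconv' h0C' hwC').2
        have f2 := (gdist_convex hconv' hwC' hvC').2
        have : (gdist C' (0, 0) w : ℤ) + (gdist C' w v : ℤ) ≤ (t : ℤ) := by
          rw [f1, f2, ← e1, ← e2]
          exact_mod_cast hwd
        exact_mod_cast this
    have himg : (fun w => (w, bcond C w)) '' Mset v t C
        = (fun w => (w, bcond C' w)) '' Mset v t C' := by
      rw [hMeq]
      apply Set.image_congr
      intro w hw
      rw [hbc w hw]
    refine ⟨hv, hvC', ?_, ?_⟩
    · rw [haiC, haiC', himg]
    · rw [haiC]; exact Option.some_ne_none _
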